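/- If P₁ and P₂ are vertex sets of two regular m-gons inscribed in the same circle with P₁ ∩ P₂ = ∅, then the lines connecting a point of P₁ to a point of P₂ have at most m distinct directions. -/

import Mathlib

open Real

/-- If `P₁` and `P₂` are vertex sets of two regular `m`-gons inscribed in the same circle
with `P₁ ∩ P₂ = ∅`, then the lines connecting a point of `P₁` to a point of `P₂` have at
most `m` distinct directions. -/
theorem stmt_4 (m : ℕ) (hm : 3 ≤ m) (c : ℝ × ℝ) (ρ α β : ℝ) (hρ : 0 < ρ)
    (P₁ P₂ : Set (ℝ × ℝ))
    (hP₁ : P₁ = (fun k : ℕ =>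
      c + ρ • (Real.cos (2 * π * k / m + α), Real.sin (2 * π * k / m + α))) '' {k | k < m})
    (hP₂ : P₂ = (fun k : ℕ =>
      c + ρ • (Real.cos (2 * π * k / m + β), Real.sin (2 * π * k / m + β))) '' {k | k < m})
    (hdisj : P₁ ∩ P₂ = ∅) :
    Set.ncard {d : Submodule ℝ (ℝ × ℝ) |
      ∃ p ∈ P₁, ∃ q ∈ P₂, d = Submodule.span ℝ {p - q}} ≤ m := by
  have hm0 : (m : ℝ) ≠ 0 := by positivity
  set γ : ℝ := (α + β) / 2 with hγ
  set w : ℝ → ℝ × ℝ := fun φ => (-Real.sin φ, Real.cos φ) with hw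
  have hwne : ∀ φ, w φ ≠ 0 := by
    intro φ h
    have h1 : -Real.sin φ = 0 ∧ Real.cos φ = 0 := by
      simpa [hw, Prod.ext_iff] using h
    have := Real.sin_sq_add_cos_sq φ
    rw [show Real.sin φ = 0 by linarith [h1.1], h1.2] at this
    norm_num at this
  have hwneg : ∀ φ, w (φ + π) = -w φ := by
    intro φ
    simp [hw, Real.sin_add_pi, Real.cos_add_pi, Prod.ext_iff]
  have key : {d : Submodule ℝ (ℝ × ℝ) | ∃ p ∈ P₁, ∃ q ∈ P₂, d = Submodule.span ℝ {p - q}}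
      ⊆ (fun s : ℕ => Submodule.span ℝ {w (π * s / m + γ)}) '' {s | s < m} := by
    rintro d ⟨p, hp, q, hq, rfl⟩
    have hp' := hp; have hq' := hq
    rw [hP₁] at hp'; rw [hP₂] at hq'
    obtain ⟨j, hj, rfl⟩ := hp'
    obtain ⟨k, hk, rfl⟩ := hq'
    have hjm : j < m := hj
    have hkm : k < m := hk
    set θ₁ : ℝ := 2 * π * j / m + α with hθ₁
    set θ₂ : ℝ := 2 * π * k / m + β with hθ₂
    have hpq : (c + ρ • (Real.cos θ₁, Real.sin θ₁)) - (c + ρ • (Real.cos θ₂, Real.sin θ₂))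
        = (2 * ρ * Real.sin ((θ₁ - θ₂) / 2)) • w ((θ₁ + θ₂) / 2) := by
      rw [add_sub_add_left_eq_sub, ← smul_sub]
      simp only [hw, Prod.mk_sub_mk, Prod.smul_mk, smul_eq_mul]
      rw [Real.cos_sub_cos, Real.sin_sub_sin, Prod.ext_iff]
      constructor <;> ring
    have hne : (c + ρ • (Real.cos θ₁, Real.sin θ₁)) - (c + ρ • (Real.cos θ₂, Real.sin θ₂)) ≠ 0 := by
      intro h
      rw [sub_eq_zero] at h
      have : (c + ρ • (Real.cos θ₁, Real.sin θ₁)) ∈ P₁ ∩ P₂ := ⟨hp, h ▸ hq⟩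
      rw [hdisj] at this
      exact this
    have ht : 2 * ρ * Real.sin ((θ₁ - θ₂) / 2) ≠ 0 := by
      intro h
      rw [hpq, h, zero_smul] at hne
      exact hne rfl
    refine ⟨(j + k) % m, Nat.mod_lt _ (by omega), ?_⟩
    have hspan : Submodule.span ℝ
        {(c + ρ • (Real.cos θ₁, Real.sin θ₁)) - (c + ρ • (Real.cos θ₂, Real.sin θ₂))}
        = Submodule.span ℝ {w ((θ₁ + θ₂) / 2)} := by
      rw [hpq]
      exact Submodule.span_singleton_smul_eq (isUnit_iff_ne_zero.2 ht) _
    have hφ : (θ₁ + θ₂) / 2 = π * (j + k : ℕ) / m + γ := by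
      rw [hθ₁, hθ₂, hγ]
      push_cast
      ring
    have hdm := Nat.div_add_mod (j + k) m
    have hqle : (j + k) / m < 2 :=
      (Nat.div_lt_iff_lt_mul (by omega)).2 (by omega)
    show Submodule.span ℝ {w (π * (((j + k) % m : ℕ) : ℝ) / m + γ)} = _
    rw [hspan, hφ]
    rcases Nat.le_one_iff_eq_zero_or_eq_one.mp (Nat.lt_succ_iff.mp hqle) with h01 | h01
    · rw [h01] at hdm
      have hjk : j + k = (j + k) % m := by omega
      rw [← hjk]
    · rw [h01] at hdm
      have hjk : j + k = m + (j + k) % m := by omega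
      have heq : π * ((j + k : ℕ) : ℝ) / m + γ = (π * (((j + k) % m : ℕ) : ℝ) / m + γ) + π := by
        rw [show ((j + k : ℕ) : ℝ) = ((m + (j + k) % m : ℕ) : ℝ) from congrArg _ hjk]
        push_cast
        field_simp
        ring
      rw [heq, hwneg]
      rw [show -w (π * (((j + k) % m : ℕ) : ℝ) / m + γ)
          = (-1 : ℝ) • w (π * (((j + k) % m : ℕ) : ℝ) / m + γ) by simp]
      exact (Submodule.span_singleton_smul_eq (isUnit_iff_ne_zero.2 (by norm_num)) _).symm
  have hset : {s : ℕ | s < m} = (↑(Finset.range m) : Set ℕ) := by ext s; simp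
  rw [hset] at key
  calc Set.ncard {d : Submodule ℝ (ℝ × ℝ) | ∃ p ∈ P₁, ∃ q ∈ P₂, d = Submodule.span ℝ {p - q}}
      ≤ Set.ncard ((fun s : ℕ => Submodule.span ℝ {w (π * s / m + γ)})
          '' (↑(Finset.range m) : Set ℕ)) :=
        Set.ncard_le_ncard key ((Finset.range m).finite_toSet.image _)
    _ ≤ Set.ncard (↑(Finset.range m) : Set ℕ) :=
        Set.ncard_image_le (Finset.range m).finite_toSet
    _ = m := by rw [Set.ncard_coe_finset, Finset.card_range]
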